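/- arXiv:2001.00543 — 3 statements merged into one kernel-verified Lean document; each statement's English description precedes it below -/
import Mathlib

section
/- Let m₁, m₂, …, m_k be positive integers and define partial sums M_ℓ = m₁ + ⋯ + m_ℓ for ℓ ∈ [k]. Then the sum ∑_{ℓ=1}^k m_ℓ/√(M_ℓ) is at most √(M_k · (1 + ln M_k)). -/
open Finset

private lemma sum_div_le_log (k : ℕ) (m : ℕ → ℕ) (hm : ∀ ℓ ∈ Finset.Icc 1 k, 0 < m ℓ) :
    (∑ ℓ ∈ Finset.Icc 1 k, (m ℓ : ℝ) / (∑ i ∈ Finset.Icc 1 ℓ, (m i : ℝ))) ≤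
      1 + Real.log (∑ i ∈ Finset.Icc 1 k, (m i : ℝ)) := by
  induction k with
  | zero => simp
  | succ k ih =>
    have hm' : ∀ ℓ ∈ Finset.Icc 1 k, 0 < m ℓ := by
      intro ℓ hℓ; apply hm; simp at hℓ ⊢; omega
    have hMk1 : (0:ℝ) < ∑ i ∈ Finset.Icc 1 (k+1), (m i : ℝ) := by
      apply Finset.sum_pos
      · intro i hi; exact_mod_cast hm i hi
      · exact ⟨k+1, by simp⟩
    rw [Finset.sum_Icc_succ_top (by omega : 1 ≤ k+1)]
    rcases Nat.eq_zero_or_pos k with rfl | hk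
    · have h1 : (∑ i ∈ Finset.Icc 1 1, (m i : ℝ)) = (m 1 : ℝ) := by simp
      simp only [h1]
      have hm1 : (0:ℝ) < (m 1 : ℝ) := by exact_mod_cast hm 1 (by simp)
      have : (m 1 : ℝ) / (m 1 : ℝ) = 1 := div_self hm1.ne'
      rw [Finset.sum_Icc_succ_top (le_refl 1)] at *
      simp [this]
      have : (1:ℝ) ≤ (m 1 : ℝ) := by
        have := hm 1 (by simp); exact_mod_cast this
      exact Real.log_nonneg this
    · have hMk : (0:ℝ) < ∑ i ∈ Finset.Icc 1 k, (m i : ℝ) := by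
        apply Finset.sum_pos
        · intro i hi; exact_mod_cast hm' i hi
        · exact ⟨k, by simp; omega⟩
      have hsplit : (∑ i ∈ Finset.Icc 1 (k+1), (m i : ℝ)) =
          (∑ i ∈ Finset.Icc 1 k, (m i : ℝ)) + (m (k+1) : ℝ) := by
        rw [Finset.sum_Icc_succ_top (by omega : 1 ≤ k+1)]
      have key : (m (k+1) : ℝ) / (∑ i ∈ Finset.Icc 1 (k+1), (m i : ℝ)) ≤
          Real.log (∑ i ∈ Finset.Icc 1 (k+1), (m i : ℝ)) -
            Real.log (∑ i ∈ Finset.Icc 1 k, (m i : ℝ)) := by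
        have hlog := Real.log_le_sub_one_of_pos
          (show (0:ℝ) < (∑ i ∈ Finset.Icc 1 k, (m i : ℝ)) / (∑ i ∈ Finset.Icc 1 (k+1), (m i : ℝ)) from
            div_pos hMk hMk1)
        rw [Real.log_div hMk.ne' hMk1.ne'] at hlog
        have : (∑ i ∈ Finset.Icc 1 k, (m i : ℝ)) / (∑ i ∈ Finset.Icc 1 (k+1), (m i : ℝ)) - 1
            = -((m (k+1) : ℝ) / (∑ i ∈ Finset.Icc 1 (k+1), (m i : ℝ))) := by
          field_simp
          linarith [hsplit]
        rw [this] at hlog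
        linarith
      have := ih hm'
      linarith
theorem sum_ratio_sqrt_bound (k : ℕ) (m : ℕ → ℕ) (hm : ∀ ℓ ∈ Finset.Icc 1 k, 0 < m ℓ) :
    (∑ ℓ ∈ Finset.Icc 1 k,
        (m ℓ : ℝ) / Real.sqrt (∑ i ∈ Finset.Icc 1 ℓ, (m i : ℝ))) ≤
      Real.sqrt ((∑ i ∈ Finset.Icc 1 k, (m i : ℝ)) *
        (1 + Real.log (∑ i ∈ Finset.Icc 1 k, (m i : ℝ)))) := by
  have hMpos : ∀ ℓ ∈ Finset.Icc 1 k, (0:ℝ) < ∑ i ∈ Finset.Icc 1 ℓ, (m i : ℝ) := by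
    intro ℓ hℓ
    simp at hℓ
    apply Finset.sum_pos
    · intro i hi
      simp at hi
      have := hm i (by simp; omega)
      exact_mod_cast this
    · exact ⟨ℓ, by simp; omega⟩
  set S := ∑ ℓ ∈ Finset.Icc 1 k,
      (m ℓ : ℝ) / Real.sqrt (∑ i ∈ Finset.Icc 1 ℓ, (m i : ℝ)) with hS
  have hSnonneg : 0 ≤ S := by
    apply Finset.sum_nonneg
    intro ℓ hℓ
    positivity
  have hrw : S = ∑ ℓ ∈ Finset.Icc 1 k,
      (Real.sqrt (m ℓ)) * (Real.sqrt (m ℓ) / Real.sqrt (∑ i ∈ Finset.Icc 1 ℓ, (m i : ℝ))) := by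
    apply Finset.sum_congr rfl
    intro ℓ hℓ
    rw [mul_div_assoc']
    congr 1
    rw [Real.mul_self_sqrt (by positivity)]
  have cs := Finset.sum_mul_sq_le_sq_mul_sq (Finset.Icc 1 k)
      (fun ℓ => Real.sqrt (m ℓ))
      (fun ℓ => Real.sqrt (m ℓ) / Real.sqrt (∑ i ∈ Finset.Icc 1 ℓ, (m i : ℝ)))
  have h1 : (∑ ℓ ∈ Finset.Icc 1 k, (Real.sqrt (m ℓ))^2) = ∑ i ∈ Finset.Icc 1 k, (m i : ℝ) := by
    apply Finset.sum_congr rfl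
    intro ℓ hℓ
    rw [Real.sq_sqrt (by positivity)]
  have h2 : (∑ ℓ ∈ Finset.Icc 1 k, (Real.sqrt (m ℓ) / Real.sqrt (∑ i ∈ Finset.Icc 1 ℓ, (m i : ℝ)))^2)
      = ∑ ℓ ∈ Finset.Icc 1 k, (m ℓ : ℝ) / (∑ i ∈ Finset.Icc 1 ℓ, (m i : ℝ)) := by
    apply Finset.sum_congr rfl
    intro ℓ hℓ
    rw [div_pow, Real.sq_sqrt (by positivity), Real.sq_sqrt (le_of_lt (hMpos ℓ hℓ))]
  have hS2 : S^2 ≤ (∑ i ∈ Finset.Icc 1 k, (m i : ℝ)) *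
      ∑ ℓ ∈ Finset.Icc 1 k, (m ℓ : ℝ) / (∑ i ∈ Finset.Icc 1 ℓ, (m i : ℝ)) := by
    rw [hrw]
    calc _ ≤ _ := cs
    _ = _ := by rw [h1, h2]
  have hbound := sum_div_le_log k m hm
  have hMknonneg : (0:ℝ) ≤ ∑ i ∈ Finset.Icc 1 k, (m i : ℝ) := by positivity
  have hS2' : S^2 ≤ (∑ i ∈ Finset.Icc 1 k, (m i : ℝ)) *
      (1 + Real.log (∑ i ∈ Finset.Icc 1 k, (m i : ℝ))) := by
    calc S^2 ≤ _ := hS2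
    _ ≤ _ := mul_le_mul_of_nonneg_left hbound hMknonneg
  calc S = Real.sqrt (S^2) := by rw [Real.sqrt_sq hSnonneg]
  _ ≤ _ := Real.sqrt_le_sqrt hS2'
end

section
/- Let X be a real-valued random variable taking values in the integers with probability mass function p, and let p_max = sup_i p(i). Then |P(X ≤ 0) - E[1/(1 + e^X)]| ≤ (2e/(e-1))·p_max. -/
open Real

set_option maxHeartbeats 1000000 in
theorem pmf_abs_bound (p : ℤ → ℝ) (hp : ∀ i, 0 ≤ p i) (hsum : HasSum p 1)
    (pmax : ℝ) (hmax : ∀ i, p i ≤ pmax) :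
    |(∑' i : ℤ, if i ≤ 0 then p i else 0) - ∑' i : ℤ, p i / (1 + Real.exp i)| ≤
      (2 * Real.exp 1 / (Real.exp 1 - 1)) * pmax := by
  have hps : Summable p := hsum.summable
  set f : ℤ → ℝ := fun i => if i ≤ 0 then p i else 0 with hfdef
  set g : ℤ → ℝ := fun i => p i / (1 + Real.exp i) with hgdef
  have hden : ∀ i : ℤ, (0:ℝ) < 1 + Real.exp i := fun i => by positivity
  have hf : Summable f := by
    apply hps.of_nonneg_of_le (fun i => by by_cases h : i ≤ 0 <;> simp [f, h, hp i])
    intro i; by_cases h : i ≤ 0 <;> simp [f, h, hp i]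
  have hg : Summable g := by
    apply hps.of_nonneg_of_le (fun i => div_nonneg (hp i) (hden i).le)
    intro i
    rw [div_le_iff₀ (hden i)]
    nlinarith [hp i, Real.exp_pos ((i:ℝ))]
  have hpmax0 : 0 ≤ pmax := le_trans (hp 0) (hmax 0)
  -- pointwise bound
  have key : ∀ i : ℤ, |f i - g i| ≤ pmax * Real.exp (-|(i:ℝ)|) := by
    intro i
    by_cases h : i ≤ 0
    · have hic : (i:ℝ) ≤ 0 := by exact_mod_cast h
      have habs : |(i:ℝ)| = -(i:ℝ) := abs_of_nonpos hic
      have heq : f i - g i = p i * (Real.exp i / (1 + Real.exp i)) := by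
        simp only [f, g, if_pos h]
        field_simp
        ring
      rw [heq, abs_of_nonneg (mul_nonneg (hp i) (by positivity)), habs, neg_neg]
      have h1 : Real.exp ((i:ℝ)) / (1 + Real.exp ((i:ℝ))) ≤ Real.exp ((i:ℝ)) := by
        rw [div_le_iff₀ (hden i)]
        nlinarith [Real.exp_pos ((i:ℝ))]
      exact mul_le_mul (hmax i) h1 (by positivity) hpmax0
    · have hic : (0:ℝ) ≤ (i:ℝ) := by exact_mod_cast (le_of_lt (lt_of_not_ge h))
      have habs : |(i:ℝ)| = (i:ℝ) := abs_of_nonneg hic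
      have heq : f i - g i = -(p i / (1 + Real.exp i)) := by simp [f, g, h]
      rw [heq, abs_neg, abs_of_nonneg (div_nonneg (hp i) (hden i).le), habs]
      have h1 : p i / (1 + Real.exp ((i:ℝ))) ≤ p i * Real.exp (-(i:ℝ)) := by
        rw [div_le_iff₀ (hden i), Real.exp_neg, mul_assoc]
        nlinarith [Real.exp_pos ((i:ℝ)), hp i,
          inv_pos.mpr (Real.exp_pos ((i:ℝ))),
          mul_inv_cancel₀ (Real.exp_ne_zero ((i:ℝ)))]
      exact h1.trans (mul_le_mul_of_nonneg_right (hmax i) (Real.exp_pos _).le)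
  -- dominating series
  have he1 : Real.exp (-1 : ℝ) < 1 := by
    rw [Real.exp_lt_one_iff]; norm_num
  have he0 : 0 ≤ Real.exp (-1 : ℝ) := (Real.exp_pos _).le
  set S : ℝ := (1 - Real.exp (-1:ℝ))⁻¹ + Real.exp (-1:ℝ) * (1 - Real.exp (-1:ℝ))⁻¹ with hS
  have hgeo : HasSum (fun n : ℕ => (Real.exp (-1:ℝ))^n) (1 - Real.exp (-1:ℝ))⁻¹ :=
    hasSum_geometric_of_lt_one he0 he1
  have hdom : HasSum (fun i : ℤ => pmax * Real.exp (-|(i:ℝ)|)) (pmax * S) := by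
    have h1 : HasSum (fun n : ℕ => Real.exp (-|(((n:ℤ)):ℝ)|)) (1 - Real.exp (-1:ℝ))⁻¹ := by
      convert hgeo using 2 with n
      rw [← Real.exp_nat_mul]
      congr 1
      push_cast
      rw [abs_of_nonneg (by positivity)]
      ring
    have h2 : HasSum (fun n : ℕ => Real.exp (-|(((-(n+1):ℤ)):ℝ)|))
        (Real.exp (-1:ℝ) * (1 - Real.exp (-1:ℝ))⁻¹) := by
      have h3 := hgeo.mul_left (Real.exp (-1:ℝ))
      convert h3 using 2 with n
      · rfl
      rw [← Real.exp_nat_mul, ← Real.exp_add]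
      congr 1
      push_cast
      rw [abs_of_nonpos (by linarith [Nat.cast_nonneg (α := ℝ) n])]
      ring
    exact (HasSum.of_nat_of_neg_add_one h1 h2).mul_left pmax
  have hsummable_diff : Summable (fun i => f i - g i) := hf.sub hg
  have habs_sum : Summable (fun i => |f i - g i|) := hsummable_diff.abs
  calc |(∑' i : ℤ, f i) - ∑' i : ℤ, g i|
      = |∑' i : ℤ, (f i - g i)| := by rw [Summable.tsum_sub hf hg]
    _ ≤ ∑' i : ℤ, |f i - g i| := by
        have h5 : ‖∑' i : ℤ, (f i - g i)‖ ≤ ∑' i : ℤ, ‖f i - g i‖ :=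
          norm_tsum_le_tsum_norm (by simpa only [Real.norm_eq_abs] using habs_sum)
        simpa only [Real.norm_eq_abs] using h5
    _ ≤ ∑' i : ℤ, pmax * Real.exp (-|(i:ℝ)|) :=
        Summable.tsum_le_tsum key habs_sum hdom.summable
    _ = pmax * S := hdom.tsum_eq
    _ ≤ (2 * Real.exp 1 / (Real.exp 1 - 1)) * pmax := by
        rw [hS]
        have he : 1 < Real.exp 1 := by linarith [Real.add_one_le_exp 1]
        have hinv : Real.exp (-1:ℝ) = (Real.exp 1)⁻¹ := by rw [Real.exp_neg]
        rw [hinv, mul_comm]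
        apply mul_le_mul_of_nonneg_right _ hpmax0
        have hpos : (0:ℝ) < Real.exp 1 := Real.exp_pos 1
        have h1 : (1 - (Real.exp 1)⁻¹) = (Real.exp 1 - 1)/Real.exp 1 := by
          field_simp
        rw [h1, inv_div]
        have h4 : (Real.exp 1)⁻¹ * (Real.exp 1 / (Real.exp 1 - 1)) = 1 / (Real.exp 1 - 1) := by
          field_simp
        rw [h4, ← add_div]
        gcongr
        · linarith
end

section
/- Fix μ ∈ (0,1), ε ∈ (0,1), a natural number n, and ρ ∈ (0,1]. Let Z ∼ Bin(n, μ). If the adversary follows the false policy (lying at every stage) with initial relative weight ρ and absolute loss Q(y) = y, the expected aggregate loss equals n(1-μ) + ∑_{j=0}^{n} P(Z > j) · g^(j)(ρ), where g^(j)(ρ) = 1/(1 + (1/ρ - 1)/ε^j). -/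
open Finset

noncomputable def cc (μ : ℝ) (n j : ℕ) : ℝ :=
  ∑ i ∈ Finset.Ioc j n, (n.choose i : ℝ) * μ ^ i * (1 - μ) ^ (n - i)

noncomputable def ff (ε ρ : ℝ) (j : ℕ) : ℝ := 1 / (1 + (1/ρ - 1) / ε ^ j)

lemma Ioc_eq_Ico (a b : ℕ) : Finset.Ioc a b = Finset.Ico (a+1) (b+1) := by
  ext x; simp [Nat.lt_succ_iff]

lemma cc_top (μ : ℝ) (n : ℕ) : cc μ n n = 0 := by simp [cc]

lemma cc_gt (μ : ℝ) (n : ℕ) : cc μ n (n+1) = 0 := by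
  simp [cc, Finset.Ioc_eq_empty (by omega : ¬ n + 1 < n)]

lemma binom_one (μ : ℝ) (n : ℕ) :
    ∑ k ∈ Finset.range (n+1), (n.choose k : ℝ) * μ ^ k * (1 - μ) ^ (n - k) = 1 := by
  have h := add_pow μ (1 - μ) n
  rw [show μ + (1 - μ) = (1:ℝ) by ring, one_pow] at h
  conv_rhs => rw [h]
  exact Finset.sum_congr rfl (fun k _ => by ring)

lemma cc_zero_succ (μ : ℝ) (n : ℕ) :
    cc μ (n+1) 0 = μ + (1 - μ) * cc μ n 0 := by
  unfold cc
  rw [Ioc_eq_Ico, Ioc_eq_Ico, Finset.sum_Ico_eq_sum_range, Finset.sum_Ico_eq_sum_range]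
  simp only [Nat.add_sub_cancel]
  have expand : ∀ k ∈ Finset.range (n+1),
      (((n+1).choose (1+k) : ℝ)) * μ ^ (1+k) * (1 - μ) ^ (n+1-(1+k))
        = μ * ((n.choose k : ℝ) * μ ^ k * (1 - μ) ^ (n - k))
          + (n.choose (1+k) : ℝ) * μ ^ (1+k) * (1 - μ) ^ (n - k) := by
    intro k hk
    have h1 : (n+1).choose (1+k) = n.choose k + n.choose (1+k) := by
      rw [add_comm 1 k]; exact Nat.choose_succ_succ n k
    have h2 : n + 1 - (1+k) = n - k := by omega
    rw [h1, h2]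
    push_cast
    ring
  have hsum : ∑ k ∈ Finset.range (n+1), (n.choose (1+k) : ℝ) * μ ^ (1+k) * (1 - μ) ^ (n - k)
      = (1 - μ) * ∑ k ∈ Finset.range n, (n.choose (1+k) : ℝ) * μ ^ (1+k) * (1 - μ) ^ (n - (1+k)) := by
    rw [Finset.sum_range_succ]
    have hz : (n.choose (1+n) : ℝ) = 0 := by
      rw [Nat.choose_eq_zero_of_lt (by omega)]; simp
    rw [hz]
    simp only [zero_mul, mul_zero, add_zero]
    rw [Finset.mul_sum]
    refine Finset.sum_congr rfl (fun k hk => ?_)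
    have hk' : k < n := Finset.mem_range.mp hk
    have h3 : n - k = (n - (1+k)) + 1 := by omega
    rw [h3, pow_succ]
    ring
  rw [Finset.sum_congr rfl expand, Finset.sum_add_distrib, ← Finset.mul_sum, binom_one,
    mul_one, hsum]

lemma cc_pascal (μ : ℝ) (n j : ℕ) :
    cc μ (n+1) (j+1) = μ * cc μ n j + (1 - μ) * cc μ n (j+1) := by
  unfold cc
  rw [Ioc_eq_Ico, Ioc_eq_Ico, Ioc_eq_Ico, Finset.sum_Ico_eq_sum_range,
    Finset.sum_Ico_eq_sum_range, Finset.sum_Ico_eq_sum_range]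
  have e1 : n + 1 + 1 - (j + 1 + 1) = n - j := by omega
  have e2 : n + 1 - (j + 1) = n - j := by omega
  have e3 : n + 1 - (j + 1 + 1) = n - (j + 1) := by omega
  rw [e1, e2, e3]
  have expand : ∀ k ∈ Finset.range (n - j),
      (((n+1).choose (j+1+1+k) : ℝ)) * μ ^ (j+1+1+k) * (1 - μ) ^ (n+1-(j+1+1+k))
        = μ * ((n.choose (j+1+k) : ℝ) * μ ^ (j+1+k) * (1 - μ) ^ (n - (j+1+k)))
          + (n.choose (j+1+1+k) : ℝ) * μ ^ (j+1+1+k) * (1 - μ) ^ (n+1-(j+1+1+k)) := by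
    intro k hk
    have hk' : k < n - j := Finset.mem_range.mp hk
    have h1 : (n+1).choose (j+1+1+k) = n.choose (j+1+k) + n.choose (j+1+1+k) := by
      have : j+1+1+k = (j+1+k) + 1 := by omega
      rw [this]
      exact Nat.choose_succ_succ n (j+1+k)
    have h2 : n + 1 - (j+1+1+k) = n - (j+1+k) := by omega
    rw [h1, h2]
    push_cast
    ring
  rw [Finset.sum_congr rfl expand, Finset.sum_add_distrib, ← Finset.mul_sum]
  congr 1
  rcases Nat.eq_zero_or_pos (n - j) with h0 | hpos
  · rw [h0]
    have : n - (j+1) = 0 := by omega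
    rw [this]
    simp
  · obtain ⟨m, hm⟩ : ∃ m, n - j = m + 1 := ⟨n - j - 1, by omega⟩
    have hjn : j < n := by omega
    have hm' : n - (j + 1) = m := by omega
    rw [hm, hm', Finset.sum_range_succ]
    have hz : (n.choose (j+1+1+m) : ℝ) = 0 := by
      rw [Nat.choose_eq_zero_of_lt (by omega)]; simp
    rw [hz]
    simp only [zero_mul, mul_zero, add_zero]
    rw [Finset.mul_sum]
    refine Finset.sum_congr rfl (fun k hk => ?_)
    have hk' : k < m := Finset.mem_range.mp hk
    have h3 : n + 1 - (j+1+1+k) = (n - (j+1+1+k)) + 1 := by omega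
    rw [h3, pow_succ]
    ring

theorem false_policy_loss (μ ε : ℝ) (hμ : μ ∈ Set.Ioo (0:ℝ) 1) (hε : ε ∈ Set.Ioo (0:ℝ) 1)
    (V : ℕ → ℝ → ℝ)
    (hV0 : ∀ ρ ∈ Set.Ioc (0:ℝ) 1, V 0 ρ = 0)
    (hVs : ∀ n, ∀ ρ ∈ Set.Ioc (0:ℝ) 1,
      V (n+1) ρ = μ * (ρ + V n (1 / (1 + (1/ρ - 1) / ε)))
        + (1 - μ) * (1 + V n ρ))
    (n : ℕ) (ρ : ℝ) (hρ : ρ ∈ Set.Ioc (0:ℝ) 1) :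
    V n ρ = n * (1 - μ)
      + ∑ j ∈ Finset.range (n+1),
          (∑ i ∈ Finset.Ioc j n, (n.choose i : ℝ) * μ ^ i * (1 - μ) ^ (n - i))
            * (1 / (1 + (1/ρ - 1) / ε ^ j)) := by
  obtain ⟨hε0, hε1⟩ := hε
  -- g maps Ioc 0 1 to itself
  set g : ℝ → ℝ := fun ρ => 1 / (1 + (1/ρ - 1) / ε) with hg_def
  have hg : ∀ ρ ∈ Set.Ioc (0:ℝ) 1, g ρ ∈ Set.Ioc (0:ℝ) 1 := by
    rintro ρ ⟨hρ0, hρ1⟩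
    have h1 : (1:ℝ)/ρ - 1 ≥ 0 := by
      have : (1:ℝ) ≤ 1/ρ := one_le_one_div hρ0 hρ1
      linarith
    have hd : (1:ℝ) ≤ 1 + (1/ρ - 1) / ε := by
      have := div_nonneg h1 hε0.le
      linarith
    constructor
    · positivity
    · rw [div_le_one (by linarith)]; linarith
  have hden : ∀ ρ ∈ Set.Ioc (0:ℝ) 1, ∀ j : ℕ, (0:ℝ) < 1 + (1/ρ - 1) / ε ^ j := by
    rintro ρ ⟨hρ0, hρ1⟩ j
    have h1 : (1:ℝ)/ρ - 1 ≥ 0 := by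
      have : (1:ℝ) ≤ 1/ρ := one_le_one_div hρ0 hρ1
      linarith
    have := div_nonneg h1 (pow_nonneg hε0.le j)
    linarith
  have hf0 : ∀ ρ ∈ Set.Ioc (0:ℝ) 1, ff ε ρ 0 = ρ := by
    rintro ρ ⟨hρ0, hρ1⟩
    simp only [ff, pow_zero, div_one]
    rw [show (1:ℝ) + (1/ρ - 1) = 1/ρ by ring, one_div_one_div]
  have hfshift : ∀ ρ ∈ Set.Ioc (0:ℝ) 1, ∀ j : ℕ, ff ε (g ρ) j = ff ε ρ (j+1) := by
    intro ρ hρ j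
    have hd1 : (0:ℝ) < 1 + (1/ρ - 1) / ε := by
      have := hden ρ hρ 1
      simpa using this
    have hinv : 1 / g ρ = 1 + (1/ρ - 1) / ε := by
      simp only [hg_def, one_div_one_div]
    simp only [ff, hinv]
    congr 2
    rw [show 1 + (1/ρ - 1) / ε - 1 = (1/ρ - 1) / ε by ring, div_div, pow_succ,
      mul_comm (ε ^ j) ε]
  -- main induction
  suffices h : ∀ m, ∀ ρ ∈ Set.Ioc (0:ℝ) 1,
      V m ρ = m * (1 - μ) + ∑ j ∈ Finset.range (m+1), cc μ m j * ff ε ρ j by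
    have := h n ρ hρ
    simpa only [cc, ff] using this
  intro m
  induction m with
  | zero =>
    intro ρ hρ
    rw [hV0 ρ hρ]
    simp [cc_top]
  | succ k IH =>
    intro ρ hρ
    rw [hVs k ρ hρ, IH ρ hρ, IH (g ρ) (hg ρ hρ)]
    have hshift : ∑ j ∈ Finset.range (k+1), cc μ k j * ff ε (g ρ) j
        = ∑ j ∈ Finset.range (k+1), cc μ k j * ff ε ρ (j+1) := by
      refine Finset.sum_congr rfl (fun j _ => ?_)
      rw [hfshift ρ hρ j]
    rw [hshift]
    -- RHS manipulation
    rw [Finset.sum_range_succ' (fun j => cc μ (k+1) j * ff ε ρ j) (k+1)]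
    rw [hf0 ρ hρ, cc_zero_succ]
    have hpas : ∀ j ∈ Finset.range (k+1),
        cc μ (k+1) (j+1) * ff ε ρ (j+1)
          = μ * (cc μ k j * ff ε ρ (j+1)) + (1-μ) * (cc μ k (j+1) * ff ε ρ (j+1)) := by
      intro j _
      rw [cc_pascal]; ring
    rw [Finset.sum_congr rfl hpas, Finset.sum_add_distrib, ← Finset.mul_sum, ← Finset.mul_sum]
    -- now relate ∑_{j∈range(k+1)} cc k (j+1) * ff (j+1) to ∑_{j∈range(k+1)} cc k j * ff j
    have hL : ∑ j ∈ Finset.range (k+1), cc μ k j * ff ε ρ j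
        = (∑ j ∈ Finset.range k, cc μ k (j+1) * ff ε ρ (j+1)) + cc μ k 0 * ρ := by
      rw [Finset.sum_range_succ' (fun j => cc μ k j * ff ε ρ j) k, hf0 ρ hρ]
    have hR : ∑ j ∈ Finset.range (k+1), cc μ k (j+1) * ff ε ρ (j+1)
        = ∑ j ∈ Finset.range k, cc μ k (j+1) * ff ε ρ (j+1) := by
      rw [Finset.sum_range_succ, cc_gt]
      simp
    rw [hR, hL]
    push_cast
    ring
end
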